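/- Let \(Z = \{ z z' : z \in Z_3, z' \in Z_3' \} \subset A\), where \(Z_3 = \{1, a_1, a_2, a_1 a_2, a_2 a_1, a_1 a_2 a_1\}\) and \(Z_3' = \{1, a_3, a_4, a_3 a_4, a_4 a_3, a_4 a_3 a_4\}\). For \(j \in \{1, 4\}\) and any \(\mu, \nu \in Z\), if \(\mu a_j \nu^{-1}\) lies in \(Q = \ker f\), then \(\mu a_j \nu^{-1} = 1\). (Equivalently, the sets \(\mathcal{X}_1\) and \(\mathcal{X}_4\) of nontrivial elements of \(Q\) of the form \(\mu a_1 \nu^{-1}\), respectively \(\mu a_4 \nu^{-1}\), are empty.) -/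

import Mathlib

/-- The pairs of indices (0-based: `aᵢ ↦ i - 1`) of commuting generators of the group `A`:
these encode the commutation relations `a₁a₃ = a₃a₁`, `a₁a₄ = a₄a₁`, `a₂a₃ = a₃a₂`,
`a₂a₄ = a₄a₂`, `a₁a₇ = a₇a₁`, `a₁a₈ = a₈a₁`, `a₄a₅ = a₅a₄`, `a₄a₆ = a₆a₄`, `a₅a₈ = a₈a₅`. -/
def commPairs : List (Fin 8 × Fin 8) :=
  [(0, 2), (0, 3), (1, 2), (1, 3), (0, 6), (0, 7), (3, 4), (3, 5), (4, 7)]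

/-- The defining relations of the group `A`: the generators `a₁, …, a₈` (indexed by `Fin 8`)
are involutions, and the pairs listed in `commPairs` commute. -/
def ARels : Set (FreeGroup (Fin 8)) :=
  {r | (∃ i : Fin 8, r = .of i * .of i) ∨
    ∃ p ∈ commPairs, r = .of p.1 * .of p.2 * (.of p.1)⁻¹ * (.of p.2)⁻¹}

/-- The group `A`: the graph product of 8 groups of order two determined by the
graph with edges `commPairs`. -/
abbrev GroupA := PresentedGroup ARels

/-- The images in `S₃ × S₃` of the generators of `A`:
`a₁, a₅ ↦ ((1 2), e)`, `a₂, a₆ ↦ ((2 3), e)`, `a₃, a₇ ↦ (e, (1 2))`, `a₄, a₈ ↦ (e, (2 3))`. -/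
def aImage : Fin 8 → Equiv.Perm (Fin 3) × Equiv.Perm (Fin 3) :=
  ![(Equiv.swap 0 1, 1), (Equiv.swap 1 2, 1), (1, Equiv.swap 0 1), (1, Equiv.swap 1 2),
    (Equiv.swap 0 1, 1), (Equiv.swap 1 2, 1), (1, Equiv.swap 0 1), (1, Equiv.swap 1 2)]

theorem ARels_hold : ∀ r ∈ ARels, FreeGroup.lift aImage r = 1 := by
  rintro r (⟨i, rfl⟩ | ⟨p, hp, rfl⟩)
  · simp only [map_mul, FreeGroup.lift_apply_of]
    revert i; decide
  · simp only [map_mul, map_inv, FreeGroup.lift_apply_of]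
    fin_cases hp <;> decide

/-- The homomorphism `f : A → S₃ × S₃` of Proposition 6. -/
def fA : GroupA →* Equiv.Perm (Fin 3) × Equiv.Perm (Fin 3) :=
  PresentedGroup.toGroup ARels_hold

/-- The coset representatives `Z₃ = {1, a₁, a₂, a₁a₂, a₂a₁, a₁a₂a₁} ⊆ A`. -/
def Zthree : Set GroupA :=
  {1, PresentedGroup.of 0, PresentedGroup.of 1,
    PresentedGroup.of 0 * PresentedGroup.of 1,
    PresentedGroup.of 1 * PresentedGroup.of 0,
    PresentedGroup.of 0 * PresentedGroup.of 1 * PresentedGroup.of 0}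

/-- The coset representatives `Z₃' = {1, a₃, a₄, a₃a₄, a₄a₃, a₄a₃a₄} ⊆ A`. -/
def Zthree' : Set GroupA :=
  {1, PresentedGroup.of 2, PresentedGroup.of 3,
    PresentedGroup.of 2 * PresentedGroup.of 3,
    PresentedGroup.of 3 * PresentedGroup.of 2,
    PresentedGroup.of 3 * PresentedGroup.of 2 * PresentedGroup.of 3}

/-- The system `Z = Z₃ · Z₃'` of representatives of the cosets of `Q = ker f` in `A`. -/
def Zreps : Set GroupA := {x | ∃ z ∈ Zthree, ∃ z' ∈ Zthree', x = z * z'}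


section Aux

local notation "o" i => (PresentedGroup.of i : GroupA)

lemma rel_one {r : FreeGroup (Fin 8)} (hr : r ∈ ARels) :
    (QuotientGroup.mk r : GroupA) = 1 :=
  (QuotientGroup.eq_one_iff r).2 (Subgroup.subset_normalClosure hr)

lemma sqA (i : Fin 8) : (o i) * (o i) = 1 := rel_one (Or.inl ⟨i, rfl⟩)

lemma inv_o (i : Fin 8) : (o i)⁻¹ = o i := by
  rw [inv_eq_iff_mul_eq_one]; exact sqA i

lemma commA {p : Fin 8 × Fin 8} (hp : p ∈ commPairs) :
    (o p.1) * (o p.2) = (o p.2) * (o p.1) := by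
  have h : (o p.1) * (o p.2) * (o p.1)⁻¹ * (o p.2)⁻¹ = 1 :=
    rel_one (Or.inr ⟨p, hp, rfl⟩)
  have h2 : (o p.1) * (o p.2)
      = ((o p.1) * (o p.2) * (o p.1)⁻¹ * (o p.2)⁻¹) * ((o p.2) * (o p.1)) := by group
  rw [h, one_mul] at h2; exact h2

lemma fA_of (i : Fin 8) : fA (o i) = aImage i := PresentedGroup.toGroup.of ARels_hold

lemma z3_inj : ∀ z ∈ Zthree, ∀ w ∈ Zthree, (fA z).1 = (fA w).1 → z = w := by
  intro z hz w hw h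
  simp only [Zthree, Set.mem_insert_iff, Set.mem_singleton_iff] at hz hw
  rcases hz with rfl|rfl|rfl|rfl|rfl|rfl <;> rcases hw with rfl|rfl|rfl|rfl|rfl|rfl <;>
    simp only [map_mul, map_one, fA_of, aImage, Matrix.cons_val_zero, Matrix.cons_val_one,
      Matrix.head_cons, Prod.fst_mul, Prod.fst_one] at h <;>
    first | rfl | (exact absurd h (by decide))

lemma z3'_inj : ∀ z ∈ Zthree', ∀ w ∈ Zthree', (fA z).2 = (fA w).2 → z = w := by
  intro z hz w hw h
  simp only [Zthree', Set.mem_insert_iff, Set.mem_singleton_iff] at hz hw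
  rcases hz with rfl|rfl|rfl|rfl|rfl|rfl <;> rcases hw with rfl|rfl|rfl|rfl|rfl|rfl <;>
    simp only [map_mul, map_one, fA_of, aImage, Prod.snd_mul, Prod.snd_one] at h <;>
    first | rfl | (exact absurd h (by decide))

lemma z3'_fst : ∀ z ∈ Zthree', (fA z).1 = 1 := by
  intro z hz
  simp only [Zthree', Set.mem_insert_iff, Set.mem_singleton_iff] at hz
  rcases hz with rfl|rfl|rfl|rfl|rfl|rfl <;>
    simp [map_mul, fA_of, aImage, Prod.fst_mul]

lemma z3_snd : ∀ z ∈ Zthree, (fA z).2 = 1 := by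
  intro z hz
  simp only [Zthree, Set.mem_insert_iff, Set.mem_singleton_iff] at hz
  rcases hz with rfl|rfl|rfl|rfl|rfl|rfl <;>
    simp [map_mul, fA_of, aImage, Prod.snd_mul]

lemma zreps_inj : ∀ x ∈ Zreps, ∀ y ∈ Zreps, fA x = fA y → x = y := by
  rintro x ⟨z, hz, z', hz', rfl⟩ y ⟨w, hw, w', hw', rfl⟩ h
  have h1 : (fA z).1 = (fA w).1 := by
    have := congrArg Prod.fst h
    simpa [map_mul, Prod.fst_mul, z3'_fst z' hz', z3'_fst w' hw'] using this
  have h2 : (fA z').2 = (fA w').2 := by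
    have := congrArg Prod.snd h
    simpa [map_mul, Prod.snd_mul, z3_snd z hz, z3_snd w hw] using this
  rw [z3_inj z hz w hw h1, z3'_inj z' hz' w' hw' h2]

lemma z3_mul_a1 : ∀ z ∈ Zthree, z * (o (0:Fin 8)) ∈ Zthree := by
  intro z hz
  simp only [Zthree, Set.mem_insert_iff, Set.mem_singleton_iff] at hz ⊢
  rcases hz with rfl|rfl|rfl|rfl|rfl|rfl
  · exact Or.inr (Or.inl (one_mul _))
  · exact Or.inl (sqA 0)
  · exact Or.inr (Or.inr (Or.inr (Or.inr (Or.inl rfl))))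
  · exact Or.inr (Or.inr (Or.inr (Or.inr (Or.inr rfl))))
  · refine Or.inr (Or.inr (Or.inl ?_))
    rw [mul_assoc, sqA 0, mul_one]
  · refine Or.inr (Or.inr (Or.inr (Or.inl ?_)))
    rw [mul_assoc, sqA 0, mul_one]

lemma z3'_mul_a4 : ∀ z ∈ Zthree', z * (o (3:Fin 8)) ∈ Zthree' := by
  intro z hz
  simp only [Zthree', Set.mem_insert_iff, Set.mem_singleton_iff] at hz ⊢
  rcases hz with rfl|rfl|rfl|rfl|rfl|rfl
  · exact Or.inr (Or.inr (Or.inl (one_mul _)))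
  · exact Or.inr (Or.inr (Or.inr (Or.inl rfl)))
  · exact Or.inl (sqA 3)
  · refine Or.inr (Or.inl ?_)
    rw [mul_assoc, sqA 3, mul_one]
  · exact Or.inr (Or.inr (Or.inr (Or.inr (Or.inr rfl))))
  · refine Or.inr (Or.inr (Or.inr (Or.inr (Or.inl ?_))))
    rw [mul_assoc, sqA 3, mul_one]

lemma a1_comm_z3' : ∀ z ∈ Zthree', (o (0:Fin 8)) * z = z * (o (0:Fin 8)) := by
  intro z hz
  have c2 : Commute (o (0:Fin 8)) (o (2:Fin 8)) := commA (by decide : ((0:Fin 8),(2:Fin 8)) ∈ commPairs)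
  have c3 : Commute (o (0:Fin 8)) (o (3:Fin 8)) := commA (by decide : ((0:Fin 8),(3:Fin 8)) ∈ commPairs)
  simp only [Zthree', Set.mem_insert_iff, Set.mem_singleton_iff] at hz
  rcases hz with rfl|rfl|rfl|rfl|rfl|rfl
  · rw [one_mul, mul_one]
  · exact c2.eq
  · exact c3.eq
  · exact (c2.mul_right c3).eq
  · exact (c3.mul_right c2).eq
  · exact ((c3.mul_right c2).mul_right c3).eq

lemma zreps_mul (μ : GroupA) (hμ : μ ∈ Zreps) (j : Fin 8) (hj : j = 0 ∨ j = 3) :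
    μ * (o j) ∈ Zreps := by
  obtain ⟨z, hz, z', hz', rfl⟩ := hμ
  rcases hj with rfl|rfl
  · exact ⟨z * (o (0:Fin 8)), z3_mul_a1 z hz, z', hz', by
      rw [mul_assoc, mul_assoc, a1_comm_z3' z' hz']⟩
  · exact ⟨z, hz, z' * (o (3:Fin 8)), z3'_mul_a4 z' hz', by rw [mul_assoc]⟩

end Aux

/-- The sets `𝒳₁` and `𝒳₄` are empty: for `j ∈ {1, 4}` (indices `0` and `3` here) and
`μ, ν ∈ Z`, if `μ aⱼ ν⁻¹ ∈ Q = ker f` then `μ aⱼ ν⁻¹ = 1`. -/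
theorem X1_X4_empty (μ ν : GroupA) (hμ : μ ∈ Zreps) (hν : ν ∈ Zreps)
    (j : Fin 8) (hj : j = 0 ∨ j = 3)
    (hker : μ * PresentedGroup.of j * ν⁻¹ ∈ MonoidHom.ker fA) :
    μ * PresentedGroup.of j * ν⁻¹ = 1 := by
  have hmem := zreps_mul μ hμ j hj
  have heq : fA (μ * PresentedGroup.of j) = fA ν := by
    have h := hker
    rw [MonoidHom.mem_ker, map_mul, map_inv, mul_inv_eq_one] at h
    exact h
  rw [zreps_inj _ hmem _ hν heq, mul_inv_cancel]
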